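/- Let b ∈ ℂ and suppose h_{j,m} ∈ ℂ[∂,λ] (j, m ∈ ℤ) satisfy h_{j,m}(∂+λ,μ)·h_{i,j+m}(∂,λ) = h_{i,m}(∂+μ,λ)·h_{j,i+m}(∂,μ) in ℂ[∂,λ,μ] for all i, j, m. Then each h_{0,m} is independent of ∂ (i.e., taking i = j = 0 and comparing coefficients in λ, h_{0,m}(∂+λ,μ)·h_{0,m}(∂,λ) = h_{0,m}(∂+μ,λ)·h_{0,m}(∂,μ) forces h_{0,m} ∈ ℂ[λ]). -/

import Mathlib

open Polynomial

private lemma coeff_comp_X_add_C_sub_one {q : Polynomial ℂ} {a : ℂ} {n : ℕ} (hn : 1 ≤ n)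
    (hq : q.natDegree ≤ n) :
    (q.comp (X + C a)).coeff (n - 1) = q.coeff (n - 1) + n * a * q.coeff n := by
  rw [← taylor_apply, taylor_coeff]
  have hd : (hasseDeriv (n-1) q).natDegree < 2 := by
    have h1 := natDegree_hasseDeriv_le q (n-1)
    omega
  rw [Polynomial.eval_eq_sum_range' hd]
  simp only [Finset.sum_range_succ, Finset.sum_range_zero, hasseDeriv_coeff]
  have e1 : 0 + (n-1) = n - 1 := by omega
  have e2 : 1 + (n-1) = n := by omega
  rw [e1, e2]
  have e3 : n.choose (n-1) = n := by
    rw [Nat.choose_symm (by omega : 1 ≤ n), Nat.choose_one_right]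
  rw [e3, Nat.choose_self]
  push_cast
  ring

private lemma coeff_comp_X_add_C_top {q : Polynomial ℂ} {a : ℂ} {n : ℕ}
    (hq : q.natDegree = n) : (q.comp (X + C a)).coeff n = q.coeff n := by
  have h1 : (q.comp (X + C a)).natDegree = n := by
    rw [natDegree_comp, natDegree_X_add_C, hq, mul_one]
  rw [← h1, coeff_natDegree,
    leadingCoeff_comp (by rw [natDegree_X_add_C]; exact one_ne_zero)]
  rw [(monic_X_add_C a).leadingCoeff, one_pow, mul_one, h1, ← hq, coeff_natDegree]

private lemma coeff_mul_two_sub_one {p q : Polynomial ℂ} {n : ℕ} (hn : 1 ≤ n)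
    (hp : p.natDegree ≤ n) (hq : q.natDegree ≤ n) :
    (p * q).coeff (2*n - 1) = p.coeff (n-1) * q.coeff n + p.coeff n * q.coeff (n-1) := by
  rw [coeff_mul, Finset.Nat.sum_antidiagonal_eq_sum_range_succ_mk, show (2*n-1).succ = 2*n by omega]
  have hsub : ({n-1, n} : Finset ℕ) ⊆ Finset.range (2*n) := by
    intro k hk; simp only [Finset.mem_insert, Finset.mem_singleton] at hk
    simp only [Finset.mem_range]; omega
  rw [← Finset.sum_subset hsub ?_]
  · rw [Finset.sum_pair (by omega : n-1 ≠ n), show 2*n-1-(n-1) = n by omega,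
      show 2*n-1-n = n-1 by omega]
  · intro k hk hk2
    simp only [Finset.mem_range] at hk
    simp only [Finset.mem_insert, Finset.mem_singleton, not_or] at hk2
    rcases lt_or_ge k n with hkn | hkn
    · have : n < 2*n-1-k := by omega
      rw [coeff_eq_zero_of_natDegree_lt (lt_of_le_of_lt hq this), mul_zero]
    · have : n < k := by omega
      rw [coeff_eq_zero_of_natDegree_lt (lt_of_le_of_lt hp this), zero_mul]

/-- If h_{j,m}(∂+λ,μ)h_{i,j+m}(∂,λ) = h_{i,m}(∂+μ,λ)h_{j,i+m}(∂,μ) for all i,j,m, then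
each h_{0,m} is independent of ∂, i.e. h_{0,m} ∈ ℂ[λ]. -/
theorem stmt17 (b : ℂ) (h : ℤ → ℤ → MvPolynomial (Fin 2) ℂ)
    (hyp : ∀ (i j m : ℤ) (x l μ : ℂ),
      MvPolynomial.eval ![x + l, μ] (h j m) * MvPolynomial.eval ![x, l] (h i (j + m))
        = MvPolynomial.eval ![x + μ, l] (h i m) * MvPolynomial.eval ![x, μ] (h j (i + m))) :
    ∀ m : ℤ, ∃ q : Polynomial ℂ,
      ∀ x y : ℂ, MvPolynomial.eval ![x, y] (h 0 m) = q.eval y := by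
  intro m
  set p : MvPolynomial (Fin 2) ℂ := h 0 m with hpdef
  have heq : ∀ x l μ : ℂ, MvPolynomial.eval ![x + l, μ] p * MvPolynomial.eval ![x, l] p
      = MvPolynomial.eval ![x + μ, l] p * MvPolynomial.eval ![x, μ] p := by
    intro x l μ
    have := hyp 0 0 m x l μ
    simpa [hpdef] using this
  set P : Polynomial (Polynomial ℂ) :=
    MvPolynomial.aeval ![Polynomial.X, Polynomial.C Polynomial.X] p with hPdef
  -- evaluation compatibility
  have hPeval : ∀ x y : ℂ, ((P.map (evalRingHom y)).eval x) = MvPolynomial.eval ![x, y] p := by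
    intro x y
    have : ((evalRingHom x).comp (mapRingHom (evalRingHom y))) P = MvPolynomial.eval ![x, y] p := by
      rw [hPdef, MvPolynomial.aeval_def, MvPolynomial.eval₂_comp_left, MvPolynomial.eval]
      congr 1
      · ext a
        simp
      · funext i
        fin_cases i <;> simp
    simpa using this
  -- the polynomial functional equation
  have key : ∀ l μ : ℂ, (P.map (evalRingHom μ)).comp (X + C l) * P.map (evalRingHom l)
      = (P.map (evalRingHom l)).comp (X + C μ) * P.map (evalRingHom μ) := by
    intro l μ
    apply Polynomial.funext
    intro x
    simp only [eval_mul, eval_comp, eval_add, eval_X, eval_C, hPeval]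
    exact heq x l μ
  -- main degree argument
  have hdeg : P.natDegree = 0 := by
    by_contra hn0
    set n := P.natDegree with hn
    have hn1 : 1 ≤ n := Nat.one_le_iff_ne_zero.mpr hn0
    have hP0 : P ≠ 0 := fun hc => hn0 (by rw [hn, hc, natDegree_zero])
    have hL : P.leadingCoeff ≠ 0 := leadingCoeff_ne_zero.mpr hP0
    -- pick two distinct points where the leading coefficient doesn't vanish
    have hfin : Set.Finite {x : ℂ | P.leadingCoeff.IsRoot x} := finite_setOf_isRoot hL
    have hinf : Set.Infinite {x : ℂ | P.leadingCoeff.IsRoot x}ᶜ := hfin.infinite_compl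
    obtain ⟨l, hl⟩ := hinf.nonempty
    obtain ⟨μ, hμ, hμl'⟩ := (hinf.diff (Set.finite_singleton l)).nonempty
    simp only [Set.mem_compl_iff, Set.mem_setOf_eq, IsRoot.def] at hl hμ
    have hμl'' : μ ≠ l := by simpa using hμl'
    set A := P.map (evalRingHom μ) with hA
    set B := P.map (evalRingHom l) with hB
    have hAn : A.natDegree = n := natDegree_map_of_leadingCoeff_ne_zero _ (by simpa using hμ)
    have hBn : B.natDegree = n := natDegree_map_of_leadingCoeff_ne_zero _ (by simpa using hl)
    have hAc : A.coeff n = P.leadingCoeff.eval μ := by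
      rw [hA, coeff_map]; rfl
    have hBc : B.coeff n = P.leadingCoeff.eval l := by
      rw [hB, coeff_map]; rfl
    -- coefficients of composed polynomials
    have hcompA : (A.comp (X + C l)).natDegree ≤ n := by
      rw [natDegree_comp, natDegree_X_add_C, hAn, mul_one]
    have hcompB : (B.comp (X + C μ)).natDegree ≤ n := by
      rw [natDegree_comp, natDegree_X_add_C, hBn, mul_one]
    have hcompAc : (A.comp (X + C l)).coeff n = A.coeff n := coeff_comp_X_add_C_top hAn
    have hcompBc : (B.comp (X + C μ)).coeff n = B.coeff n := coeff_comp_X_add_C_top hBn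
    have hkey := congrArg (fun r => r.coeff (2*n - 1)) (key l μ)
    rw [coeff_mul_two_sub_one hn1 hcompA hBn.le, coeff_mul_two_sub_one hn1 hcompB hAn.le,
      coeff_comp_X_add_C_sub_one hn1 hAn.le, coeff_comp_X_add_C_sub_one hn1 hBn.le,
      hcompAc, hcompBc] at hkey
    have hcontr : (n : ℂ) * l * (A.coeff n * B.coeff n) = n * μ * (A.coeff n * B.coeff n) := by
      ring_nf at hkey ⊢
      linear_combination hkey
    have hABn : A.coeff n * B.coeff n ≠ 0 := by
      rw [hAc, hBc]; exact mul_ne_zero hμ hl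
    have hnc : (n : ℂ) ≠ 0 := Nat.cast_ne_zero.mpr hn0
    have h1 : (n : ℂ) * l = n * μ := mul_right_cancel₀ hABn hcontr
    have h2 : l = μ := mul_left_cancel₀ hnc h1
    exact hμl'' h2.symm
  obtain ⟨c, hc⟩ : ∃ c, P = Polynomial.C c := ⟨P.coeff 0, P.eq_C_of_natDegree_eq_zero hdeg⟩
  refine ⟨c, fun x y => ?_⟩
  rw [← hPeval x y, hc]
  simp
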